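/- For every chain of subsets [n] = K_1 ⊋ K_2 ⊋ ⋯ ⊋ K_{m+1} = ∅, the set O_{K_1,…,K_{m+1}} is stable under the action of T_n and T_n acts transitively on it. Consequently, the nonempty sets O_{K_1,…,K_{m+1}} are precisely the orbits of the T_n-action on Y_n. -/

import Mathlib

noncomputable section

open Projectivization

instance projTopology {K V : Type*} [DivisionRing K] [AddCommGroup V] [Module K V]
    [TopologicalSpace V] : TopologicalSpace (Projectivization K V) :=
  inferInstanceAs (TopologicalSpace (Quotient (projectivizationSetoid K V)))

/-- The index type of nonempty subsets of `ι`. -/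
abbrev NES (ι : Type) := {I : Set ι // I.Nonempty}

/-- The ambient product `P = ∏_{∅ ≠ I ⊆ ι} ℙ^I` of projective spaces. -/
abbrev PSp (ι : Type) := (I : NES ι) → Projectivization ℂ (↥I.1 → ℂ)

/-- The subset of `ℙ^ι` consisting of points all of whose homogeneous coordinates
are nonzero (an algebraic torus). -/
def torusSet (ι : Type) : Set (Projectivization ℂ (ι → ℂ)) := {x | ∀ i, x.rep i ≠ 0}

open Classical in
/-- The `i`-th homogeneous coordinate (for the chosen representative `rep`) of the
`K`-component of a point `p ∈ P`; junk value `0` if `i ∉ K` or `K = ∅`. -/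
def pcoord (ι : Type) (p : PSp ι) (K : Set ι) (i : ι) : ℂ :=
  if h : K.Nonempty ∧ i ∈ K then (p ⟨K, h.1⟩).rep ⟨i, h.2⟩ else 0

lemma pcoord_exists_ne (ι : Type) (p : PSp ι) (K : Set ι) (hK : K.Nonempty) :
    ∃ i, i ∈ K ∧ pcoord ι p K i ≠ 0 := by
  obtain ⟨x, hx⟩ := Function.ne_iff.mp (Projectivization.rep_nonzero (p ⟨K, hK⟩))
  refine ⟨x.1, x.2, ?_⟩
  rw [pcoord, dif_pos ⟨hK, x.2⟩]
  simpa using hx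

/-- The map `ρ` from the torus to `P`, whose `I`-component is given by restricting
the homogeneous coordinates. -/
def rho (ι : Type) (x : ↥(torusSet ι)) : PSp ι := fun I =>
  Projectivization.mk ℂ (fun i : ↥I.1 => x.1.rep i.1) <| by
    obtain ⟨i, hi⟩ := I.2
    intro h0
    exact x.2 i (by simpa using congrFun h0 ⟨i, hi⟩)

/-- `Y`, the closure of `ρ(T)` in `P`. -/
def Yn (ι : Type) : Set (PSp ι) := closure (Set.range (rho ι))

/-- The chain of a point `p ∈ P`: `chainK ι p 0 = univ` (this is `K₁` in the paper)
and `chainK ι p (ℓ+1)` (i.e. `K_{ℓ+2}`) consists of those `k ∈ chainK ι p ℓ` for which the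
`k`-th homogeneous coordinate of the `chainK ι p ℓ`-component of `p` vanishes. -/
def chainK (ι : Type) (p : PSp ι) : ℕ → Set ι
  | 0 => Set.univ
  | ℓ + 1 => {k ∈ chainK ι p ℓ | pcoord ι p (chainK ι p ℓ) k = 0}

/-- A chain of subsets `ι = K 0 ⊋ K 1 ⊋ ⋯ ⊋ K m = ∅` (written `K₁ ⊋ ⋯ ⊋ K_{m+1}` in
the paper); we extend it by `∅` beyond the `m`-th step so that it is determined by
the function `K`. -/
structure SubsetChain (ι : Type) where
  m : ℕ
  K : ℕ → Set ι
  first : K 0 = Set.univ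
  strict : ∀ ℓ < m, K (ℓ + 1) ⊂ K ℓ
  last : K m = ∅
  beyond : ∀ ℓ, m ≤ ℓ → K ℓ = ∅

/-- The piece `O_{K₁,…,K_{m+1}}` of `Y`: those points of `Y` whose chain is the given one. -/
def Ochain (ι : Type) (c : SubsetChain ι) : Set (PSp ι) :=
  {p ∈ Yn ι | ∀ ℓ ≤ c.m, chainK ι p ℓ = c.K ℓ}

/-- The subset `D_{K₁,…,K_{m+1}}` of `Y`: the points whose `K_ℓ`-component has vanishing
coordinates indexed by `K_{ℓ+1}`. -/
def Dchain (ι : Type) (c : SubsetChain ι) : Set (PSp ι) :=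
  {p ∈ Yn ι | ∀ ℓ < c.m, ∀ k ∈ c.K (ℓ + 1), pcoord ι p (c.K ℓ) k = 0}

/-- The action of an element of the torus on a point of `P`:
`[a]·([b_i]_{i ∈ I})_I = ([a_i b_i]_{i ∈ I})_I`. -/
def act (ι : Type) (t : ↥(torusSet ι)) (p : PSp ι) : PSp ι := fun I =>
  Projectivization.mk ℂ (fun i : ↥I.1 => t.1.rep i.1 * (p I).rep i) <| by
    intro h0
    obtain ⟨i, hi⟩ := Function.ne_iff.mp (Projectivization.rep_nonzero (p I))
    have h : t.1.rep i.1 * (p I).rep i = 0 := by simpa using congrFun h0 i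
    exact mul_ne_zero (t.2 i.1) (by simpa using hi) h

/-- The action of a permutation `w` of `ι` on `P`: the `w(I)`-component of `w·p` is
`[a^I_{w⁻¹(j)}]_{j ∈ w(I)}`; equivalently the `J`-component of `w·p` is
`[a^{w⁻¹(J)}_{w⁻¹(j)}]_{j ∈ J}`. -/
def permAct (ι : Type) (w : Equiv.Perm ι) (p : PSp ι) : PSp ι := fun J =>
  Projectivization.mk ℂ (fun j : ↥J.1 => pcoord ι p (⇑(w⁻¹) '' J.1) (w⁻¹ j.1)) <| by
    have hK : ((⇑(w⁻¹) : ι → ι) '' J.1).Nonempty := J.2.image _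
    obtain ⟨i, hi, hne⟩ := pcoord_exists_ne ι p _ hK
    obtain ⟨j, hj, hji⟩ := hi
    intro h0
    apply hne
    have h := congrFun h0 ⟨j, hj⟩
    simpa [hji] using h

section Aux

open Projectivization

/-! ### Basic representative lemmas -/

lemma exists_unit_rep_mk {V : Type*} [AddCommGroup V] [Module ℂ V] (v : V) (hv : v ≠ 0) :
    ∃ c : ℂˣ, (Projectivization.mk ℂ v hv).rep = (c : ℂ) • v := by
  obtain ⟨a, ha⟩ := Projectivization.exists_smul_eq_mk_rep ℂ v hv
  exact ⟨a, by rw [← ha]; rfl⟩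

lemma pcoord_def {ι : Type} (p : PSp ι) {K : Set ι} (hK : K.Nonempty) {i : ι} (hi : i ∈ K) :
    pcoord ι p K i = (p ⟨K, hK⟩).rep ⟨i, hi⟩ := by
  unfold pcoord
  rw [dif_pos ⟨hK, hi⟩]

lemma pcoord_of_eq_mk {ι : Type} (p : PSp ι) {K : Set ι} (hK : K.Nonempty)
    (f : ↥K → ℂ) (hf : f ≠ 0) (hp : p ⟨K, hK⟩ = Projectivization.mk ℂ f hf) :
    ∃ c : ℂˣ, ∀ i (hi : i ∈ K), pcoord ι p K i = (c : ℂ) * f ⟨i, hi⟩ := by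
  obtain ⟨c, hc⟩ := exists_unit_rep_mk f hf
  refine ⟨c, fun i hi => ?_⟩
  rw [pcoord_def p hK hi, hp, hc]
  simp

lemma pcoord_fun_eq_rep {ι : Type} (p : PSp ι) {K : Set ι} (hK : K.Nonempty) :
    (fun i : ↥K => pcoord ι p K i.1) = (p ⟨K, hK⟩).rep :=
  funext fun i => pcoord_def p hK i.2

lemma comp_eq_mk_pcoord {ι : Type} (p : PSp ι) {K : Set ι} (hK : K.Nonempty) :
    p ⟨K, hK⟩ = Projectivization.mk ℂ (fun i : ↥K => pcoord ι p K i.1)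
      (by rw [pcoord_fun_eq_rep p hK]; exact Projectivization.rep_nonzero _) := by
  conv_lhs => rw [← Projectivization.mk_rep (p ⟨K, hK⟩)]
  congr 1
  exact (pcoord_fun_eq_rep p hK).symm

end Aux
section Aux2

open Projectivization

/-! ### Topology of projectivization -/

lemma isOpenMap_projMk (A : Type*) :
    IsOpenMap (fun v : {v : A → ℂ // v ≠ 0} => Projectivization.mk ℂ v.1 v.2) := by
  intro U hU
  have hq : Topology.IsQuotientMap (fun v : {v : A → ℂ // v ≠ 0} => Projectivization.mk ℂ v.1 v.2) :=
    isQuotientMap_quotient_mk' (s := projectivizationSetoid ℂ (A → ℂ))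
  rw [← hq.isOpen_preimage]
  have : (fun v : {v : A → ℂ // v ≠ 0} => Projectivization.mk ℂ v.1 v.2) ⁻¹'
      ((fun v : {v : A → ℂ // v ≠ 0} => Projectivization.mk ℂ v.1 v.2) '' U) =
      ⋃ c : ℂˣ, (fun w : {v : A → ℂ // v ≠ 0} =>
        (⟨(c : ℂ) • w.1, smul_ne_zero (Units.ne_zero c) w.2⟩ : {v : A → ℂ // v ≠ 0})) ⁻¹' U := by
    ext w
    simp only [Set.mem_preimage, Set.mem_image, Set.mem_iUnion]
    constructor
    · rintro ⟨u, hu, huw⟩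
      rw [Projectivization.mk_eq_mk_iff] at huw
      obtain ⟨a, ha⟩ := huw
      refine ⟨a, ?_⟩
      have : (⟨(a : ℂ) • w.1, smul_ne_zero (Units.ne_zero a) w.2⟩ : {v : A → ℂ // v ≠ 0}) = u := by
        ext; rw [← ha]; rfl
      rwa [this]
    · rintro ⟨c, hc⟩
      refine ⟨_, hc, ?_⟩
      rw [Projectivization.mk_eq_mk_iff]
      exact ⟨c, rfl⟩
  rw [this]
  refine isOpen_iUnion fun c => ?_
  have hcont : Continuous (fun w : {v : A → ℂ // v ≠ 0} =>
      (⟨(c : ℂ) • w.1, smul_ne_zero (Units.ne_zero c) w.2⟩ : {v : A → ℂ // v ≠ 0})) :=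
    Continuous.subtype_mk (by fun_prop) _
  exact hU.preimage hcont

lemma isClosed_of_preimage {X Y : Type*} [TopologicalSpace X] [TopologicalSpace Y]
    {f : X → Y} (ho : IsOpenMap f) (hs : Function.Surjective f)
    {S : Set Y} (h : IsClosed (f ⁻¹' S)) : IsClosed S := by
  rw [← isOpen_compl_iff] at h ⊢
  have himg : f '' (f ⁻¹' Sᶜ) = Sᶜ := Set.image_preimage_eq _ hs
  rw [← himg]
  apply ho
  rwa [Set.preimage_compl]

lemma surjective_projMk (A : Type*) :
    Function.Surjective (fun v : {v : A → ℂ // v ≠ 0} => Projectivization.mk ℂ v.1 v.2) := by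
  intro x
  exact ⟨⟨x.rep, x.rep_nonzero⟩, Projectivization.mk_rep x⟩

lemma isClosed_incidence {A B : Type} (i j : A) (i' j' : B) :
    IsClosed {x : Projectivization ℂ (A → ℂ) × Projectivization ℂ (B → ℂ) |
      x.1.rep i * x.2.rep j' = x.1.rep j * x.2.rep i'} := by
  apply isClosed_of_preimage ((isOpenMap_projMk A).prodMap (isOpenMap_projMk B))
    ((surjective_projMk A).prodMap (surjective_projMk B))
  have : (Prod.map (fun v : {v : A → ℂ // v ≠ 0} => Projectivization.mk ℂ v.1 v.2)
      (fun v : {v : B → ℂ // v ≠ 0} => Projectivization.mk ℂ v.1 v.2)) ⁻¹'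
      {x : Projectivization ℂ (A → ℂ) × Projectivization ℂ (B → ℂ) |
        x.1.rep i * x.2.rep j' = x.1.rep j * x.2.rep i'} =
      {vw : {v : A → ℂ // v ≠ 0} × {v : B → ℂ // v ≠ 0} |
        vw.1.1 i * vw.2.1 j' = vw.1.1 j * vw.2.1 i'} := by
    ext ⟨v, w⟩
    obtain ⟨c, hc⟩ := exists_unit_rep_mk v.1 v.2
    obtain ⟨d, hd⟩ := exists_unit_rep_mk w.1 w.2
    simp only [Set.mem_preimage, Set.mem_setOf_eq, Prod.map, hc, hd, Pi.smul_apply,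
      smul_eq_mul]
    constructor
    · intro h
      have hcd : (c : ℂ) * (d : ℂ) ≠ 0 := mul_ne_zero (Units.ne_zero c) (Units.ne_zero d)
      field_simp at h
      apply mul_left_cancel₀ hcd
      ring_nf
      ring_nf at h
      linear_combination ((c : ℂ) * (d : ℂ)) * h
    · intro h; ring_nf; linear_combination ((c : ℂ) * (d : ℂ)) * h
  rw [this]
  apply isClosed_eq
  · exact ((continuous_apply i).comp (continuous_subtype_val.comp continuous_fst)).mul
      ((continuous_apply j').comp (continuous_subtype_val.comp continuous_snd))
  · exact ((continuous_apply j).comp (continuous_subtype_val.comp continuous_fst)).mul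
      ((continuous_apply i').comp (continuous_subtype_val.comp continuous_snd))

end Aux2
section Aux3

open Projectivization

/-! ### The compatibility relation `ZRel` -/

def ZRel (ι : Type) : Set (PSp ι) :=
  {p | ∀ (I J : Set ι), I.Nonempty → ∀ i j : ι, i ∈ I → j ∈ I → I ⊆ J →
    pcoord ι p I i * pcoord ι p J j = pcoord ι p I j * pcoord ι p J i}

lemma isClosed_ZRel (ι : Type) : IsClosed (ZRel ι) := by
  have hrw : ZRel ι = ⋂ (I : Set ι) (J : Set ι) (i : ι) (j : ι),
      {p : PSp ι | (I.Nonempty ∧ i ∈ I ∧ j ∈ I ∧ I ⊆ J) →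
        pcoord ι p I i * pcoord ι p J j = pcoord ι p I j * pcoord ι p J i} := by
    ext p
    simp only [ZRel, Set.mem_setOf_eq, Set.mem_iInter]
    constructor
    · rintro h I J i j ⟨hI, hi, hj, hs⟩
      exact h I J hI i j hi hj hs
    · intro h I J hI i j hi hj hs
      exact h I J i j ⟨hI, hi, hj, hs⟩
  rw [hrw]
  refine isClosed_iInter fun I => isClosed_iInter fun J => isClosed_iInter fun i =>
    isClosed_iInter fun j => ?_
  by_cases h : I.Nonempty ∧ i ∈ I ∧ j ∈ I ∧ I ⊆ J
  · obtain ⟨hI, hi, hj, hs⟩ := h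
    have hJ : J.Nonempty := hI.mono hs
    have hset : {p : PSp ι | (I.Nonempty ∧ i ∈ I ∧ j ∈ I ∧ I ⊆ J) →
        pcoord ι p I i * pcoord ι p J j = pcoord ι p I j * pcoord ι p J i} =
        (fun p : PSp ι => (p ⟨I, hI⟩, p ⟨J, hJ⟩)) ⁻¹'
        {x : Projectivization ℂ (↥I → ℂ) × Projectivization ℂ (↥J → ℂ) |
          x.1.rep ⟨i, hi⟩ * x.2.rep ⟨j, hs hj⟩ = x.1.rep ⟨j, hj⟩ * x.2.rep ⟨i, hs hi⟩} := by
      ext p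
      simp only [Set.mem_setOf_eq, Set.mem_preimage]
      rw [pcoord_def p hI hi, pcoord_def p hI hj, pcoord_def p hJ (hs hi),
        pcoord_def p hJ (hs hj)]
      constructor
      · intro hh; exact hh ⟨hI, hi, hj, hs⟩
      · intro hh _; exact hh
    rw [hset]
    exact (isClosed_incidence (A := ↥I) (B := ↥J) ⟨i, hi⟩ ⟨j, hj⟩ ⟨i, hs hi⟩ ⟨j, hs hj⟩).preimage
      (Continuous.prodMk (continuous_apply _) (continuous_apply _))
  · have : {p : PSp ι | (I.Nonempty ∧ i ∈ I ∧ j ∈ I ∧ I ⊆ J) →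
        pcoord ι p I i * pcoord ι p J j = pcoord ι p I j * pcoord ι p J i} = Set.univ :=
      Set.eq_univ_of_forall fun p hc => absurd hc h
    rw [this]; exact isClosed_univ

lemma range_rho_subset_ZRel (ι : Type) : Set.range (rho ι) ⊆ ZRel ι := by
  rintro _ ⟨x, rfl⟩ I J hI i j hi hj hs
  have hJ : J.Nonempty := hI.mono hs
  obtain ⟨c, hc⟩ := pcoord_of_eq_mk (rho ι x) hI (fun i : ↥I => x.1.rep i.1) _ rfl
  obtain ⟨d, hd⟩ := pcoord_of_eq_mk (rho ι x) hJ (fun i : ↥J => x.1.rep i.1) _ rfl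
  rw [hc i hi, hc j hj, hd i (hs hi), hd j (hs hj)]
  ring

lemma Yn_subset_ZRel (ι : Type) : Yn ι ⊆ ZRel ι :=
  closure_minimal (range_rho_subset_ZRel ι) (isClosed_ZRel ι)

lemma component_eq_of_subset {ι : Type} {p : PSp ι} (hp : p ∈ ZRel ι)
    {I J : Set ι} (hI : I.Nonempty) (hs : I ⊆ J)
    {i0 : ι} (hi0 : i0 ∈ I) (h0 : pcoord ι p J i0 ≠ 0) :
    p ⟨I, hI⟩ = Projectivization.mk ℂ (fun i : ↥I => pcoord ι p J i.1)
      (fun hc => h0 (by simpa using congrFun hc ⟨i0, hi0⟩)) := by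
  have hrel : ∀ i j : ι, i ∈ I → j ∈ I →
      pcoord ι p I i * pcoord ι p J j = pcoord ι p I j * pcoord ι p J i :=
    fun i j hi hj => hp I J hI i j hi hj hs
  have hI0 : pcoord ι p I i0 ≠ 0 := by
    intro hz
    have hall : ∀ j (hj : j ∈ I), pcoord ι p I j = 0 := by
      intro j hj
      have := hrel j i0 hj hi0
      rw [hz, zero_mul] at this
      exact (mul_eq_zero.mp this).resolve_right h0
    have : (p ⟨I, hI⟩).rep = 0 := by
      rw [← pcoord_fun_eq_rep p hI]
      funext i
      exact hall i.1 i.2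
    exact Projectivization.rep_nonzero _ this
  rw [comp_eq_mk_pcoord p hI, Projectivization.mk_eq_mk_iff]
  refine ⟨Units.mk0 (pcoord ι p I i0 / pcoord ι p J i0) (div_ne_zero hI0 h0), ?_⟩
  funext i
  have := hrel i.1 i0 i.2 hi0
  simp only [Pi.smul_apply, Units.smul_def, smul_eq_mul, Units.val_mk0]
  rw [div_mul_eq_mul_div, div_eq_iff h0]
  linear_combination -this

end Aux3
section Aux4

open Projectivization

/-! ### Chain lemmas -/

lemma chainK_succ_subset {ι : Type} (p : PSp ι) (ℓ : ℕ) :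
    chainK ι p (ℓ + 1) ⊆ chainK ι p ℓ := fun _ hk => hk.1

lemma chainK_antitone {ι : Type} (p : PSp ι) : Antitone (chainK ι p) :=
  antitone_nat_of_succ_le (chainK_succ_subset p)

lemma chainK_ssubset {ι : Type} (p : PSp ι) {ℓ : ℕ} (h : (chainK ι p ℓ).Nonempty) :
    chainK ι p (ℓ + 1) ⊂ chainK ι p ℓ := by
  obtain ⟨i, hi, hne⟩ := pcoord_exists_ne ι p _ h
  exact ⟨chainK_succ_subset p ℓ, fun hsub => hne (hsub hi).2⟩

lemma chainK_empty_succ {ι : Type} (p : PSp ι) {ℓ : ℕ} (h : chainK ι p ℓ = ∅) :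
    chainK ι p (ℓ + 1) = ∅ :=
  Set.eq_empty_of_subset_empty (h ▸ chainK_succ_subset p ℓ)

lemma chainK_empty_mono {ι : Type} (p : PSp ι) {ℓ ℓ' : ℕ} (hle : ℓ ≤ ℓ')
    (h : chainK ι p ℓ = ∅) : chainK ι p ℓ' = ∅ := by
  induction ℓ', hle using Nat.le_induction with
  | base => exact h
  | succ n _ ih => exact chainK_empty_succ p ih

lemma chainK_eventually_empty {ι : Type} [Finite ι] (p : PSp ι) :
    ∃ ℓ, chainK ι p ℓ = ∅ := by
  by_contra hc
  push_neg at hc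
  have hne : ∀ ℓ, (chainK ι p ℓ).Nonempty := hc
  have hlt : ∀ ℓ, (chainK ι p (ℓ + 1)).ncard < (chainK ι p ℓ).ncard := fun ℓ =>
    Set.ncard_lt_ncard (chainK_ssubset p (hne ℓ)) (Set.toFinite _)
  have key : ∀ ℓ, (chainK ι p ℓ).ncard + ℓ ≤ (chainK ι p 0).ncard := by
    intro ℓ
    induction ℓ with
    | zero => simp
    | succ n ih =>
      have := hlt n
      omega
  have h1 := key ((chainK ι p 0).ncard + 1)
  omega

/-! ### The action and chains -/

lemma act_component {ι : Type} (t : ↥(torusSet ι)) (p : PSp ι) {K : Set ι} (hK : K.Nonempty) :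
    ∃ c : ℂˣ, ∀ i (hi : i ∈ K),
      pcoord ι (act ι t p) K i = (c : ℂ) * (t.1.rep i * pcoord ι p K i) := by
  obtain ⟨c, hc⟩ := pcoord_of_eq_mk (act ι t p) hK
    (fun i : ↥K => t.1.rep i.1 * (p ⟨K, hK⟩).rep i) (by
      intro h0
      obtain ⟨i, hi⟩ := Function.ne_iff.mp (Projectivization.rep_nonzero (p ⟨K, hK⟩))
      have h : t.1.rep i.1 * (p ⟨K, hK⟩).rep i = 0 := by simpa using congrFun h0 i
      exact mul_ne_zero (t.2 i.1) (by simpa using hi) h) rfl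
  refine ⟨c, fun i hi => ?_⟩
  rw [hc i hi, pcoord_def p hK hi]

lemma pcoord_act_eq_zero_iff {ι : Type} (t : ↥(torusSet ι)) (p : PSp ι) (K : Set ι) (i : ι) :
    pcoord ι (act ι t p) K i = 0 ↔ pcoord ι p K i = 0 := by
  by_cases h : K.Nonempty ∧ i ∈ K
  · obtain ⟨c, hc⟩ := act_component t p h.1
    rw [hc i h.2]
    simp [Units.ne_zero c, t.2 i]
  · unfold pcoord
    rw [dif_neg h, dif_neg h]

lemma chainK_act {ι : Type} (t : ↥(torusSet ι)) (p : PSp ι) :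
    chainK ι (act ι t p) = chainK ι p := by
  funext ℓ
  induction ℓ with
  | zero => rfl
  | succ n ih =>
    show {k ∈ chainK ι (act ι t p) n | pcoord ι (act ι t p) (chainK ι (act ι t p) n) k = 0} = _
    rw [ih]
    ext k
    simp only [Set.mem_setOf_eq, pcoord_act_eq_zero_iff]
    rfl

/-! ### Continuity of the action -/

lemma scale_ne_zero {A : Type*} (t : A → ℂ) (ht : ∀ i, t i ≠ 0) {v : A → ℂ} (hv : v ≠ 0) :
    (fun i => t i * v i) ≠ 0 := by
  intro hc
  apply hv
  funext i
  have h := congrFun hc i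
  simp only [Pi.zero_apply] at h ⊢
  exact (mul_eq_zero.mp h).resolve_left (ht i)

def scaleMap {A : Type} (t : A → ℂ) (ht : ∀ i, t i ≠ 0) :
    Projectivization ℂ (A → ℂ) → Projectivization ℂ (A → ℂ) := fun x =>
  Quotient.liftOn' (x : Quotient (projectivizationSetoid ℂ (A → ℂ)))
    (fun v : {v : A → ℂ // v ≠ 0} =>
      Projectivization.mk ℂ (fun i => t i * v.1 i) (scale_ne_zero t ht v.2))
    (by
      intro a b h
      have hab : Projectivization.mk ℂ a.1 a.2 = Projectivization.mk ℂ b.1 b.2 :=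
        Quotient.sound' h
      rw [Projectivization.mk_eq_mk_iff] at hab
      obtain ⟨c, hc⟩ := hab
      rw [Projectivization.mk_eq_mk_iff]
      refine ⟨c, funext fun i => ?_⟩
      have := congrFun hc i
      simp only [Pi.smul_apply, Units.smul_def, smul_eq_mul] at this ⊢
      rw [← this]
      ring)

lemma scaleMap_mk {A : Type} (t : A → ℂ) (ht : ∀ i, t i ≠ 0) (v : A → ℂ) (hv : v ≠ 0) :
    scaleMap t ht (Projectivization.mk ℂ v hv) =
      Projectivization.mk ℂ (fun i => t i * v i) (scale_ne_zero t ht hv) := rfl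

lemma continuous_scaleMap {A : Type} (t : A → ℂ) (ht : ∀ i, t i ≠ 0) :
    Continuous (scaleMap t ht) := by
  have h1 : Continuous (fun v : {v : A → ℂ // v ≠ 0} =>
      (⟨fun i => t i * v.1 i, scale_ne_zero t ht v.2⟩ : {v : A → ℂ // v ≠ 0})) :=
    Continuous.subtype_mk (continuous_pi fun i => by
      exact continuous_const.mul ((continuous_apply i).comp continuous_subtype_val)) _
  have h2 : Continuous (fun v : {v : A → ℂ // v ≠ 0} =>
      Projectivization.mk ℂ (fun i => t i * v.1 i) (scale_ne_zero t ht v.2)) :=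
    ((continuous_quotient_mk' (s := projectivizationSetoid ℂ (A → ℂ)))).comp h1
  exact Continuous.quotient_liftOn' h2 _

lemma scaleMap_apply {A : Type} (t : A → ℂ) (ht : ∀ i, t i ≠ 0)
    (x : Projectivization ℂ (A → ℂ)) :
    scaleMap t ht x = Projectivization.mk ℂ (fun i => t i * x.rep i)
      (scale_ne_zero t ht x.rep_nonzero) := by
  conv_lhs => rw [← Projectivization.mk_rep x]
  rfl

lemma continuous_act {ι : Type} (t : ↥(torusSet ι)) : Continuous (act ι t) := by
  have hact : act ι t = fun (p : PSp ι) (I : NES ι) =>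
      scaleMap (fun i : ↥I.1 => t.1.rep i.1) (fun i => t.2 i.1) (p I) := by
    funext p I
    rw [scaleMap_apply]
    rfl
  rw [hact]
  exact continuous_pi fun I => (continuous_scaleMap _ _).comp (continuous_apply I)

end Aux4
section Aux5

open Projectivization

/-! ### The action preserves `Yn` -/

lemma torus_vec_ne_zero {ι : Type} (t x : ↥(torusSet ι)) :
    (fun i => t.1.rep i * x.1.rep i) ≠ 0 := by
  intro hc
  obtain ⟨i, hi⟩ := Function.ne_iff.mp (Projectivization.rep_nonzero x.1)
  have h := congrFun hc i
  simp only [Pi.zero_apply] at h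
  exact mul_ne_zero (t.2 i) (x.2 i) h

def torusMul {ι : Type} (t x : ↥(torusSet ι)) : ↥(torusSet ι) :=
  ⟨Projectivization.mk ℂ (fun i => t.1.rep i * x.1.rep i) (torus_vec_ne_zero t x), by
    obtain ⟨c, hc⟩ := exists_unit_rep_mk _ (torus_vec_ne_zero t x)
    intro i
    rw [hc]
    simp only [Pi.smul_apply, smul_eq_mul]
    exact mul_ne_zero (Units.ne_zero c) (mul_ne_zero (t.2 i) (x.2 i))⟩

lemma act_rho {ι : Type} (t x : ↥(torusSet ι)) :
    act ι t (rho ι x) = rho ι (torusMul t x) := by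
  funext I
  show Projectivization.mk ℂ (fun i : ↥I.1 => t.1.rep i.1 * (rho ι x I).rep i) _ =
    Projectivization.mk ℂ (fun i : ↥I.1 => (torusMul t x).1.rep i.1) _
  obtain ⟨c, hc⟩ := exists_unit_rep_mk (fun i : ↥I.1 => x.1.rep i.1) (by
    obtain ⟨i, hi⟩ := I.2
    intro h0
    exact x.2 i (by simpa using congrFun h0 ⟨i, hi⟩))
  obtain ⟨d, hd⟩ := exists_unit_rep_mk _ (torus_vec_ne_zero t x)
  rw [Projectivization.mk_eq_mk_iff]
  refine ⟨c * d⁻¹, funext fun i => ?_⟩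
  have h1 : (rho ι x I).rep i = (c : ℂ) * x.1.rep i.1 := by
    have := congrFun hc i
    simp at this; exact this
  have h2 : (torusMul t x).1.rep i.1 = (d : ℂ) * (t.1.rep i.1 * x.1.rep i.1) := by
    show (Projectivization.mk ℂ (fun i => t.1.rep i * x.1.rep i)
      (torus_vec_ne_zero t x)).rep i.1 = _
    rw [hd]
    simp
  simp only [Pi.smul_apply, Units.smul_def, smul_eq_mul, Units.val_mul]
  rw [h1, h2]
  have hd0 : (d : ℂ) ≠ 0 := Units.ne_zero d
  rw [Units.val_inv_eq_inv_val]
  field_simp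

lemma act_mem_Yn {ι : Type} (t : ↥(torusSet ι)) {p : PSp ι} (hp : p ∈ Yn ι) :
    act ι t p ∈ Yn ι := by
  have h1 : act ι t '' Set.range (rho ι) ⊆ Set.range (rho ι) := by
    rintro _ ⟨_, ⟨x, rfl⟩, rfl⟩
    exact ⟨torusMul t x, (act_rho t x).symm⟩
  have h2 : act ι t p ∈ act ι t '' closure (Set.range (rho ι)) := ⟨p, hp, rfl⟩
  have h3 := image_closure_subset_closure_image (f := act ι t) (s := Set.range (rho ι))
    (continuous_act t)
  exact closure_mono h1 (h3 h2)

lemma act_mem_Ochain {ι : Type} (c : SubsetChain ι) (t : ↥(torusSet ι)) {p : PSp ι}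
    (hp : p ∈ Ochain ι c) : act ι t p ∈ Ochain ι c :=
  ⟨act_mem_Yn t hp.1, fun ℓ hℓ => by rw [chainK_act]; exact hp.2 ℓ hℓ⟩

lemma chainK_eq_of_Ochain {ι : Type} {c : SubsetChain ι} {p q : PSp ι}
    (hp : p ∈ Ochain ι c) (hq : q ∈ Ochain ι c) : chainK ι p = chainK ι q := by
  funext ℓ
  rcases le_or_gt ℓ c.m with h | h
  · rw [hp.2 ℓ h, hq.2 ℓ h]
  · have hpe : chainK ι p ℓ = ∅ :=
      chainK_empty_mono p h.le ((hp.2 c.m le_rfl).trans c.last)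
    have hqe : chainK ι q ℓ = ∅ :=
      chainK_empty_mono q h.le ((hq.2 c.m le_rfl).trans c.last)
    rw [hpe, hqe]

end Aux5
section Aux6

open Projectivization

lemma mem_chainK_succ {ι : Type} (p : PSp ι) (ℓ : ℕ) (k : ι) :
    k ∈ chainK ι p (ℓ + 1) ↔ k ∈ chainK ι p ℓ ∧ pcoord ι p (chainK ι p ℓ) k = 0 :=
  Iff.rfl

lemma act_apply {ι : Type} (t : ↥(torusSet ι)) (p : PSp ι) (I : NES ι)
    (h : (fun i : ↥I.1 => t.1.rep i.1 * (p I).rep i) ≠ 0) :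
    act ι t p I = Projectivization.mk ℂ (fun i : ↥I.1 => t.1.rep i.1 * (p I).rep i) h := rfl

lemma trans_lemma {ι : Type} [Finite ι] [Nonempty ι] {p q : PSp ι}
    (hp : p ∈ Yn ι) (hq : q ∈ Yn ι) (hpq : chainK ι p = chainK ι q) :
    ∃ t : ↥(torusSet ι), act ι t p = q := by
  classical
  have hpZ := Yn_subset_ZRel ι hp
  have hqZ := Yn_subset_ZRel ι hq
  obtain ⟨ℓ0, hℓ0⟩ := chainK_eventually_empty p
  have hex : ∀ i : ι, ∃ ℓ, i ∉ chainK ι p ℓ := fun i =>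
    ⟨ℓ0, by rw [hℓ0]; exact Set.notMem_empty i⟩
  -- the level of each index
  set L : ι → ℕ := fun i => Nat.find (hex i) with hL
  have hL0 : ∀ i, L i ≠ 0 := by
    intro i h
    have hsp := Nat.find_spec (hex i)
    rw [show Nat.find (hex i) = L i from rfl, h] at hsp
    exact hsp (Set.mem_univ i)
  set a : ι → ℕ := fun i => L i - 1 with ha
  have ha1 : ∀ i, a i + 1 = L i := fun i => Nat.succ_pred_eq_of_pos (Nat.pos_of_ne_zero (hL0 i))
  have hmem : ∀ i, i ∈ chainK ι p (a i) := by
    intro i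
    have := Nat.find_min (hex i) (show a i < L i by have := ha1 i; omega)
    exact not_not.mp this
  have hnot : ∀ i, i ∉ chainK ι p (a i + 1) := by
    intro i
    rw [ha1 i]
    exact Nat.find_spec (hex i)
  have hppos : ∀ i, pcoord ι p (chainK ι p (a i)) i ≠ 0 := fun i h =>
    hnot i ((mem_chainK_succ p (a i) i).mpr ⟨hmem i, h⟩)
  have hqpos : ∀ i, pcoord ι q (chainK ι p (a i)) i ≠ 0 := by
    intro i h
    apply hnot i
    have : i ∈ chainK ι q (a i + 1) := by
      rw [mem_chainK_succ, ← hpq]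
      exact ⟨hmem i, h⟩
    rwa [← hpq] at this
  -- the scaling factors
  set τ : ι → ℂ := fun i => pcoord ι q (chainK ι p (a i)) i / pcoord ι p (chainK ι p (a i)) i
    with hτdef
  have hτ : ∀ i, τ i ≠ 0 := fun i => div_ne_zero (hqpos i) (hppos i)
  have hτ0 : τ ≠ 0 := fun h => hτ (Classical.arbitrary ι) (congrFun h _)
  -- the key pointwise identity
  have key : ∀ (ℓ : ℕ) (i : ι), i ∈ chainK ι p ℓ →
      τ i * pcoord ι p (chainK ι p ℓ) i = pcoord ι q (chainK ι p ℓ) i := by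
    intro ℓ i hiℓ
    rcases lt_trichotomy ℓ (a i) with h | h | h
    · have hsucc : i ∈ chainK ι p (ℓ + 1) := by
        have hlt : ℓ + 1 < L i := by have := ha1 i; omega
        exact not_not.mp (Nat.find_min (hex i) hlt)
      have hp0 : pcoord ι p (chainK ι p ℓ) i = 0 := ((mem_chainK_succ p ℓ i).mp hsucc).2
      have hq0 : pcoord ι q (chainK ι p ℓ) i = 0 := by
        have h2 : i ∈ chainK ι q (ℓ + 1) := by rw [← hpq]; exact hsucc
        have h3 := ((mem_chainK_succ q ℓ i).mp h2).2
        rwa [← hpq] at h3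
      rw [hp0, hq0, mul_zero]
    · rw [h, hτdef]
      exact div_mul_cancel₀ _ (hppos i)
    · exfalso
      have hle : L i ≤ ℓ := by have := ha1 i; omega
      exact Nat.find_spec (hex i) (chainK_antitone p hle hiℓ)
  -- the torus element
  obtain ⟨c, hc⟩ := exists_unit_rep_mk τ hτ0
  refine ⟨⟨Projectivization.mk ℂ τ hτ0, ?_⟩, ?_⟩
  · intro i
    rw [hc]
    simp only [Pi.smul_apply, smul_eq_mul]
    exact mul_ne_zero (Units.ne_zero c) (hτ i)
  · set t : ↥(torusSet ι) := ⟨Projectivization.mk ℂ τ hτ0, fun i => by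
      rw [hc]; simp only [Pi.smul_apply, smul_eq_mul]
      exact mul_ne_zero (Units.ne_zero c) (hτ i)⟩ with htdef
    funext I
    -- the maximal level of I
    have hexI : ∃ ℓ, ¬ I.1 ⊆ chainK ι p ℓ := by
      obtain ⟨i, hi⟩ := I.2
      exact ⟨ℓ0, fun hsubs => Set.notMem_empty i (hℓ0 ▸ hsubs hi)⟩
    set M := Nat.find hexI with hM
    have hM0 : M ≠ 0 := by
      intro h
      have hsp := Nat.find_spec hexI
      rw [show Nat.find hexI = M from rfl, h] at hsp
      exact hsp (fun x _ => Set.mem_univ x)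
    set b := M - 1 with hb
    have hb1 : b + 1 = M := Nat.succ_pred_eq_of_pos (Nat.pos_of_ne_zero hM0)
    have hsub : I.1 ⊆ chainK ι p b :=
      not_not.mp (Nat.find_min hexI (show b < M by omega))
    have hnsub : ¬ I.1 ⊆ chainK ι p (b + 1) := by rw [hb1]; exact Nat.find_spec hexI
    obtain ⟨i0, hi0I, hi0n⟩ := Set.not_subset.mp hnsub
    have hi0b : i0 ∈ chainK ι p b := hsub hi0I
    have hp0 : pcoord ι p (chainK ι p b) i0 ≠ 0 := fun h =>
      hi0n ((mem_chainK_succ p b i0).mpr ⟨hi0b, h⟩)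
    have hq0 : pcoord ι q (chainK ι p b) i0 ≠ 0 := by
      intro h
      apply hi0n
      have : i0 ∈ chainK ι q (b + 1) := by
        rw [mem_chainK_succ, ← hpq]
        exact ⟨hi0b, h⟩
      rwa [← hpq] at this
    have hcomp_p := component_eq_of_subset hpZ I.2 hsub hi0I hp0
    have hcomp_q := component_eq_of_subset hqZ I.2 hsub hi0I hq0
    obtain ⟨c1, hc1⟩ := exists_unit_rep_mk (fun i : ↥I.1 => pcoord ι p (chainK ι p b) i.1)
      (fun hcz => hp0 (by simpa using congrFun hcz ⟨i0, hi0I⟩))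
    have hrep : (p I).rep = (c1 : ℂ) • fun i : ↥I.1 => pcoord ι p (chainK ι p b) i.1 := by
      rw [show p I = _ from hcomp_p]
      exact hc1
    have htne : (fun i : ↥I.1 => t.1.rep i.1 * (p I).rep i) ≠ 0 :=
      scale_ne_zero _ (fun i => t.2 i.1) (p I).rep_nonzero
    show Projectivization.mk ℂ _ htne = q I
    rw [show q I = _ from hcomp_q, Projectivization.mk_eq_mk_iff]
    refine ⟨c * c1, funext fun i => ?_⟩
    have hkey := key b i.1 (hsub i.2)
    have ht : t.1.rep i.1 = (c : ℂ) * τ i.1 := by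
      show (Projectivization.mk ℂ τ hτ0).rep i.1 = _
      rw [hc]; rfl
    have hx : (p I).rep i = (c1 : ℂ) * pcoord ι p (chainK ι p b) i.1 := by
      rw [hrep]; rfl
    simp only [Pi.smul_apply, Units.smul_def, smul_eq_mul, Units.val_mul]
    rw [ht, hx, ← hkey]
    ring

end Aux6

/-- Proposition 2.7 (Proposition `orbitprop`): each piece `O_{K₁,…,K_{m+1}}` is stable
under the torus action and the torus acts transitively on it; consequently, the orbit of
any point of `Y_n` is one of the pieces `O_{K₁,…,K_{m+1}}`, and every nonempty piece
`O_{K₁,…,K_{m+1}}` is an orbit. -/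
theorem stmt2 (n : ℕ) (hn : 1 ≤ n) :
    (∀ c : SubsetChain (Fin n), ∀ t : ↥(torusSet (Fin n)), ∀ p ∈ Ochain (Fin n) c,
      act (Fin n) t p ∈ Ochain (Fin n) c) ∧
    (∀ c : SubsetChain (Fin n), ∀ p ∈ Ochain (Fin n) c, ∀ q ∈ Ochain (Fin n) c,
      ∃ t : ↥(torusSet (Fin n)), act (Fin n) t p = q) ∧
    (∀ p ∈ Yn (Fin n), ∃ c : SubsetChain (Fin n),
      {q | ∃ t : ↥(torusSet (Fin n)), act (Fin n) t p = q} = Ochain (Fin n) c) ∧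
    (∀ c : SubsetChain (Fin n), (Ochain (Fin n) c).Nonempty →
      ∃ p ∈ Yn (Fin n),
        Ochain (Fin n) c = {q | ∃ t : ↥(torusSet (Fin n)), act (Fin n) t p = q}) := by
  classical
  haveI : Nonempty (Fin n) := ⟨⟨0, hn⟩⟩
  refine ⟨?_, ?_, ?_, ?_⟩
  · intro c t p hp
    exact act_mem_Ochain c t hp
  · intro c p hp q hq
    exact trans_lemma hp.1 hq.1 (chainK_eq_of_Ochain hp hq)
  · intro p hp
    have hexm : ∃ m, chainK (Fin n) p m = ∅ := chainK_eventually_empty p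
    have hstrict : ∀ ℓ < Nat.find hexm, chainK (Fin n) p (ℓ + 1) ⊂ chainK (Fin n) p ℓ :=
      fun ℓ hℓ => chainK_ssubset p (Set.nonempty_iff_ne_empty.mpr (Nat.find_min hexm hℓ))
    have hbeyond : ∀ ℓ, Nat.find hexm ≤ ℓ → chainK (Fin n) p ℓ = ∅ := fun ℓ hℓ =>
      chainK_empty_mono p hℓ (Nat.find_spec hexm)
    set c : SubsetChain (Fin n) :=
      ⟨Nat.find hexm, chainK (Fin n) p, rfl, hstrict, Nat.find_spec hexm, hbeyond⟩ with hc
    have hpO : p ∈ Ochain (Fin n) c := ⟨hp, fun ℓ _ => rfl⟩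
    refine ⟨c, Set.Subset.antisymm ?_ ?_⟩
    · rintro _ ⟨t, rfl⟩
      exact act_mem_Ochain c t hpO
    · intro q hq
      exact trans_lemma hp hq.1 (chainK_eq_of_Ochain hpO hq)
  · rintro c ⟨p, hpO⟩
    refine ⟨p, hpO.1, Set.Subset.antisymm ?_ ?_⟩
    · intro q hq
      exact trans_lemma hpO.1 hq.1 (chainK_eq_of_Ochain hpO hq)
    · rintro _ ⟨t, rfl⟩
      exact act_mem_Ochain c t hpO
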